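/- Let L be a Hom-Lie algebra over a field of characteristic ≠ 2, with affine structure ⟨a,b,c⟩ = a - b + c. Suppose κ, λ are linear endomorphisms commuting with α and r ∈ L, and suppose the bracket {a,b} = [a,b] + κ(a) + λ(b-a) + r satisfies the affine Hom-Jacobi identity {α(a),{b,c}} - {α(a),{a,a}} + {α(b),{c,a}} - {α(b),{b,b}} + {α(c),{a,b}} = {α(c),{c,c}} for all a,b,c ∈ L. Then [α(a), κ(a)] = 0 for all a ∈ L, and λ([a,b]) = [λ(a),α(b)] - [α(a),κ(b)] + [α(a),λ(b)] for all a,b ∈ L. -/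

import Mathlib

/-- conversely, if {a,b} = [a,b] + κ(a) + λ(b-a) + r satisfies the affine
Hom-Jacobi identity, then [α(a),κ(a)] = 0 and
λ([a,b]) = [λ(a),α(b)] - [α(a),κ(b)] + [α(a),λ(b)]. -/
theorem stmt_15 {K L : Type*} [Field K] [AddCommGroup L] [Module K L]
    (h2 : (2 : K) ≠ 0)
    (lb : L →ₗ[K] L →ₗ[K] L) (α : L →ₗ[K] L)
    (hanti : ∀ a b, lb a b = - lb b a)
    (hjac : ∀ a b c, lb (α a) (lb b c) + lb (α b) (lb c a) + lb (α c) (lb a b) = 0)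
    (κ lam : L →ₗ[K] L)
    (hκα : ∀ a, κ (α a) = α (κ a))
    (hlama : ∀ a, lam (α a) = α (lam a))
    (r : L)
    (br : L → L → L)
    (hbr : ∀ a b, br a b = lb a b + κ a + lam (b - a) + r)
    (hHomJac : ∀ a b c : L,
      br (α a) (br b c) - br (α a) (br a a) + br (α b) (br c a)
        - br (α b) (br b b) + br (α c) (br a b) = br (α c) (br c c)) :
    (∀ a : L, lb (α a) (κ a) = 0) ∧
    (∀ a b : L,
      lam (lb a b) = lb (lam a) (α b) - lb (α a) (κ b) + lb (α a) (lam b)) := by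
  have hzero : ∀ a : L, lb a a = 0 := by
    intro a
    have h := hanti a a
    have : (2 : K) • lb a a = 0 := by rw [two_smul]; nth_rewrite 1 [h]; abel
    rcases smul_eq_zero.mp this with h' | h'
    · exact absurd h' h2
    · exact h'
  have key1 : ∀ a : L, lb (α a) (κ a) = 0 := by
    intro a
    have h := hHomJac a a 0
    simp only [hbr, map_zero, map_add, map_sub, LinearMap.zero_apply, LinearMap.add_apply,
      LinearMap.sub_apply, hzero, sub_zero, zero_sub, sub_self, add_zero, zero_add,
      LinearMap.map_zero, map_neg, LinearMap.neg_apply, neg_neg] at h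
    abel_nf at h
    rw [add_eq_right, neg_smul, one_smul, neg_eq_zero] at h
    exact h
  refine ⟨key1, fun a b => ?_⟩
  have h := hHomJac a b 0
  simp only [hbr, map_zero, map_add, map_sub, LinearMap.zero_apply, LinearMap.add_apply,
    LinearMap.sub_apply, hzero, sub_zero, zero_sub, sub_self, add_zero, zero_add,
    LinearMap.map_zero, map_neg, LinearMap.neg_apply, neg_neg, key1] at h
  rw [hanti (lam a) (α b)]
  rw [← sub_eq_zero] at h ⊢
  abel_nf at h ⊢
  exact h
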